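/- In the group G = GL_2(W) ⋊ C₂, let G₂₄ be the subgroup generated by a, ω² and ωφ. Then G₂₄ has exactly 24 elements, the cyclic subgroup ⟨a⟩ of order 3 is normal in G₂₄, the subgroup Q = ⟨ω², ωφ⟩ is isomorphic to the quaternion group Q₈ of order 8, ⟨a⟩ ∩ Q = {1}, and G₂₄ = ⟨a⟩·Q; that is, G₂₄ is an internal semidirect product C₃ ⋊ Q₈ (with ω² acting on ⟨a⟩ by inversion and ωφ acting trivially). -/

import Mathlib

open Matrix

/-- `𝔽₉`, the field with nine elements. -/
abbrev F9 : Type := GaloisField 3 2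

/-- `W = 𝕎(𝔽₉)`, the ring of Witt vectors of `𝔽₉`. -/
abbrev Wq : Type := WittVector 3 F9

/-- `σ`, the Frobenius automorphism of `W = 𝕎(𝔽₉)`. -/
noncomputable def σW : Wq ≃+* Wq := WittVector.frobeniusEquiv 3 F9

/-- `ι : W → M₂(W)`, `ι(x) = diag(x, σ(x))`. -/
noncomputable def iw (x : Wq) : Matrix (Fin 2) (Fin 2) Wq := !![x, 0; 0, σW x]

/-- The matrix `S` with rows `(0, 3)` and `(1, 0)`. -/
noncomputable def Sm : Matrix (Fin 2) (Fin 2) Wq := !![0, 3; 1, 0]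

/-- `φ`, the ring automorphism of `M₂(W)` applying `σ` to each matrix entry. -/
noncomputable def φM : Matrix (Fin 2) (Fin 2) Wq ≃+* Matrix (Fin 2) (Fin 2) Wq :=
  σW.mapMatrix

/-- The cyclic group of order two. -/
abbrev C2 : Type := Multiplicative (ZMod 2)


lemma quat_key {G : Type*} [Group G] (a x y : G)
    (ha3 : a ^ 3 = 1) (hane : a ≠ 1)
    (hx4 : x ^ 4 = 1) (hx2 : x ^ 2 ≠ 1)
    (hy2 : y ^ 2 = x ^ 2)
    (hyx : y * x = x ^ 3 * y)
    (hxa : x * a = a ^ 2 * x)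
    (hya : y * a = a * y)
    (π : G →* Multiplicative (ZMod 2)) (hπa : π a = 1) (hπx : π x = 1)
    (hπy : π y ≠ 1) :
    Nat.card (Subgroup.closure {a, x, y}) = 24 ∧
    Nat.card (Subgroup.zpowers a) = 3 ∧
    (∀ g ∈ Subgroup.closure {a, x, y}, ∀ z ∈ Subgroup.zpowers a,
      g * z * g⁻¹ ∈ Subgroup.zpowers a) ∧
    Nonempty ((Subgroup.closure {x, y}) ≃* QuaternionGroup 2) ∧
    Subgroup.zpowers a ⊓ Subgroup.closure {x, y} = ⊥ ∧
    (∀ g ∈ Subgroup.closure {a, x, y}, ∃ u ∈ Subgroup.zpowers a,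
      ∃ q ∈ Subgroup.closure {x, y}, g = u * q) ∧
    x * a * x⁻¹ = a⁻¹ ∧ y * a * y⁻¹ = a := by
  haveI : Fact (Nat.Prime 3) := ⟨by norm_num⟩
  haveI : Fact (Nat.Prime 2) := ⟨by norm_num⟩
  set A := Subgroup.zpowers a with hA
  set Q := Subgroup.closure ({x, y} : Set G) with hQ
  set H := Subgroup.closure ({a, x, y} : Set G) with hH
  have horda : orderOf a = 3 := orderOf_eq_prime ha3 hane
  have hordx : orderOf x = 4 := by
    have := orderOf_eq_prime_pow (x := x) (p := 2) (n := 1)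
      (by simpa using hx2) (by simpa using hx4)
    simpa using this
  have hainv : a⁻¹ = a ^ 2 := by
    apply inv_eq_of_mul_eq_one_right
    calc a * a ^ 2 = a ^ 3 := by group
    _ = 1 := ha3
  have conjzpow : ∀ g z : G, ∀ k : ℤ, (g * z * g⁻¹) ^ k = g * z ^ k * g⁻¹ := by
    intro g z k
    simpa [MulAut.conj_apply] using (_root_.map_zpow (MulAut.conj g) z k).symm
  have conjpow : ∀ g z : G, ∀ k : ℕ, (g * z * g⁻¹) ^ k = g * z ^ k * g⁻¹ := by
    intro g z k
    simpa [MulAut.conj_apply] using (_root_.map_pow (MulAut.conj g) z k).symm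
  -- conjugation relations
  have cxa : x * a * x⁻¹ = a ^ 2 := by rw [hxa]; group
  have h4a : a ^ 4 = a := by calc a ^ 4 = a ^ 3 * a := by group
                              _ = a := by rw [ha3, one_mul]
  have cxa' : x⁻¹ * a * x = a ^ 2 := by
    have h1 : x * a ^ 2 * x⁻¹ = a := by
      rw [← conjpow x a 2, cxa, ← pow_mul]; simpa using h4a
    calc x⁻¹ * a * x = x⁻¹ * (x * a ^ 2 * x⁻¹) * x := by rw [h1]
    _ = a ^ 2 := by group
  have cya : y * a * y⁻¹ = a := by rw [hya]; group
  have cya' : y⁻¹ * a * y = a := by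
    calc y⁻¹ * a * y = y⁻¹ * (a * y) := by group
    _ = y⁻¹ * (y * a) := by rw [hya]
    _ = a := by group
  -- conjugation preserves A
  have hconj : ∀ g : G, g * a * g⁻¹ ∈ A → ∀ z ∈ A, g * z * g⁻¹ ∈ A := by
    intro g hg z hz
    obtain ⟨k, rfl⟩ := Subgroup.mem_zpowers_iff.mp hz
    obtain ⟨m, hm⟩ := Subgroup.mem_zpowers_iff.mp hg
    rw [← conjzpow g a k, ← hm, ← _root_.zpow_mul]
    exact Subgroup.mem_zpowers_iff.mpr ⟨m * k, rfl⟩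
  have hmem_a : a ∈ ({a, x, y} : Set G) := by simp
  have hmemA : ∀ n : ℤ, a ^ n ∈ A := fun n => Subgroup.mem_zpowers_iff.mpr ⟨n, rfl⟩
  have hmemA2 : a ^ 2 ∈ A := by
    rw [pow_two]; exact mul_mem (Subgroup.mem_zpowers a) (Subgroup.mem_zpowers a)
  have main : ∀ g ∈ H, g * a * g⁻¹ ∈ A ∧ g⁻¹ * a * g ∈ A := by
    intro g hg
    induction hg using Subgroup.closure_induction with
    | mem z hz =>
      simp only [Set.mem_insert_iff, Set.mem_singleton_iff] at hz
      rcases hz with rfl | rfl | rfl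
      · constructor
        · have h : z * z * z⁻¹ = z := by group
          rw [h]; exact Subgroup.mem_zpowers _
        · have h : z⁻¹ * z * z = z := by group
          rw [h]; exact Subgroup.mem_zpowers _
      · exact ⟨by rw [cxa]; exact hmemA2, by rw [cxa']; exact hmemA2⟩
      · constructor
        · rw [cya]; exact Subgroup.mem_zpowers _
        · rw [cya']; exact Subgroup.mem_zpowers _
    | one =>
      refine ⟨?_, ?_⟩
      · have h : (1:G) * a * (1:G)⁻¹ = a := by group
        rw [h]; exact Subgroup.mem_zpowers _
      · have h : (1:G)⁻¹ * a * (1:G) = a := by group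
        rw [h]; exact Subgroup.mem_zpowers _
    | mul g h hgH hhH ihg ihh =>
      constructor
      · have e : g * h * a * (g * h)⁻¹ = g * (h * a * h⁻¹) * g⁻¹ := by group
        rw [e]; exact hconj g ihg.1 _ ihh.1
      · have e : (g * h)⁻¹ * a * (g * h) = h⁻¹ * (g⁻¹ * a * g) * h := by group
        rw [e]
        have := hconj h⁻¹ (by simpa using ihh.2) _ ihg.2
        simpa using this
    | inv g hgH ihg =>
      refine ⟨by simpa using ihg.2, by simpa using ihg.1⟩
  have hnorm : ∀ g ∈ H, ∀ z ∈ A, g * z * g⁻¹ ∈ A := fun g hg =>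
    hconj g (main g hg).1
  -- the homomorphism from the quaternion group
  have hxmod : ∀ m n : ℕ, ((m : ZMod 4) = (n : ZMod 4)) → x ^ m = x ^ n := by
    intro m n h
    rw [pow_eq_pow_iff_modEq, hordx]
    exact (ZMod.natCast_eq_natCast_iff _ _ _).mp h
  have h40 : ((4 : ℕ) : ZMod 4) = 0 := by decide
  have hyxk : ∀ k : ℕ, y * x ^ k = x ^ (3 * k) * y := by
    intro k; induction k with
    | zero => simp
    | succ k ih =>
      calc y * x ^ (k + 1) = (y * x ^ k) * x := by rw [pow_succ]; group
      _ = x ^ (3 * k) * (y * x) := by rw [ih]; group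
      _ = x ^ (3 * k) * (x ^ 3 * y) := by rw [hyx]
      _ = x ^ (3 * (k + 1)) * y := by rw [show 3 * (k+1) = 3*k + 3 by ring, pow_add]; group
  have hxky : ∀ k : ℕ, x ^ k * y = y * x ^ (3 * k) := by
    intro k
    rw [hyxk (3 * k)]
    congr 1
    apply hxmod
    push_cast
    linear_combination (-2 * (k : ZMod 4)) * h40
  have hv : ∀ i : ZMod 4, ((i.val : ℕ) : ZMod 4) = i := fun i => by
    simp [ZMod.natCast_val, ZMod.cast_id]
  have hyy : y * y = x ^ 2 := by rw [← pow_two]; exact hy2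
  set F : QuaternionGroup 2 → G := fun g =>
    match g with
    | QuaternionGroup.a i => x ^ i.val
    | QuaternionGroup.xa i => y * x ^ i.val with hF
  have hmul : ∀ g h : QuaternionGroup 2, F (g * h) = F g * F h := by
    rintro (i | i) (j | j)
    · show x ^ (i + j).val = x ^ i.val * x ^ j.val
      rw [← pow_add]
      apply hxmod; push_cast [hv]; ring
    · show y * x ^ (j - i).val = x ^ i.val * (y * x ^ j.val)
      rw [show x ^ i.val * (y * x ^ j.val) = (x ^ i.val * y) * x ^ j.val by group,
        hxky, mul_assoc, ← pow_add]
      congr 1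
      apply hxmod; push_cast [hv]
      linear_combination (-(i : ZMod 4)) * h40
    · show y * x ^ (i + j).val = (y * x ^ i.val) * x ^ j.val
      rw [mul_assoc, ← pow_add]
      congr 1
      apply hxmod; push_cast [hv]; ring
    · show x ^ (((2 : ℕ) : ZMod (2*2)) + j - i).val = (y * x ^ i.val) * (y * x ^ j.val)
      rw [show (y * x ^ i.val) * (y * x ^ j.val) = y * (x ^ i.val * y) * x ^ j.val by group,
        hxky, show y * (y * x ^ (3 * i.val)) * x ^ j.val = (y * y) * (x ^ (3 * i.val) * x ^ j.val) by group,
        hyy, ← pow_add, ← pow_add]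
      apply hxmod; push_cast [hv]
      linear_combination (-(i : ZMod 4)) * h40
  set f : QuaternionGroup 2 →* G := MonoidHom.mk' F hmul with hf
  have hfa : ∀ i, f (QuaternionGroup.a i) = x ^ i.val := fun _ => rfl
  have hfxa : ∀ i, f (QuaternionGroup.xa i) = y * x ^ i.val := fun _ => rfl
  have hvlt : ∀ i : ZMod 4, i.val < 4 := fun i => i.val_lt
  have hpow_inj : ∀ i j : ZMod 4, x ^ i.val = x ^ j.val → i = j := by
    intro i j h
    have h1 : i.val ≡ j.val [MOD 4] := by
      have := pow_eq_pow_iff_modEq.mp h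
      rwa [hordx] at this
    have h2 : i.val = j.val := by
      have h3 : i.val % 4 = j.val % 4 := h1
      rwa [Nat.mod_eq_of_lt (hvlt i), Nat.mod_eq_of_lt (hvlt j)] at h3
    rw [← hv i, ← hv j, h2]
  have hπxp : ∀ k : ℕ, π (x ^ k) = 1 := fun k => by rw [_root_.map_pow, hπx, one_pow]
  have hinj : Function.Injective f := by
    intro g h hgh
    match g, h with
    | QuaternionGroup.a i, QuaternionGroup.a j =>
      rw [hfa, hfa] at hgh; rw [hpow_inj _ _ hgh]
    | QuaternionGroup.a i, QuaternionGroup.xa j =>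
      exfalso
      have := congrArg π hgh
      rw [hfa, hfxa, _root_.map_mul, hπxp, hπxp, mul_one] at this
      exact hπy this.symm
    | QuaternionGroup.xa i, QuaternionGroup.a j =>
      exfalso
      have := congrArg π hgh
      rw [hfa, hfxa, _root_.map_mul, hπxp, hπxp, mul_one] at this
      exact hπy this
    | QuaternionGroup.xa i, QuaternionGroup.xa j =>
      rw [hfxa, hfxa] at hgh
      have := mul_left_cancel hgh
      rw [hpow_inj _ _ this]
  have hxQ : x ∈ Q := Subgroup.subset_closure (by simp)
  have hyQ : y ∈ Q := Subgroup.subset_closure (by simp)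
  have hrange : f.range = Q := by
    apply le_antisymm
    · rintro _ ⟨g, rfl⟩
      match g with
      | QuaternionGroup.a i => exact pow_mem hxQ _
      | QuaternionGroup.xa i => exact mul_mem hyQ (pow_mem hxQ _)
    · rw [hQ, Subgroup.closure_le]
      rintro z (rfl | rfl)
      · exact ⟨QuaternionGroup.a 1,
          by rw [hfa, (by decide : ((1 : ZMod (2*2)).val) = 1), pow_one]⟩
      · exact ⟨QuaternionGroup.xa 0,
          by rw [hfxa, (by decide : ((0 : ZMod (2*2)).val) = 0), pow_zero, mul_one]⟩
  have e : (Q : Subgroup G) ≃* QuaternionGroup 2 :=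
    (MulEquiv.subgroupCongr hrange.symm).trans (MonoidHom.ofInjective hinj).symm
  -- intersection is trivial
  have hAQ : A ⊓ Q = ⊥ := by
    rw [eq_bot_iff]
    intro g hg
    rw [Subgroup.mem_inf] at hg
    obtain ⟨hga, hgq⟩ := hg
    rw [← hrange] at hgq
    obtain ⟨w, hw⟩ := hgq
    have h3 : g ^ 3 = 1 := by
      obtain ⟨k, hk⟩ := Subgroup.mem_zpowers_iff.mp hga
      rw [← hk, ← _root_.zpow_natCast, ← _root_.zpow_mul, mul_comm, _root_.zpow_mul, _root_.zpow_natCast, ha3, _root_.one_zpow]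
    match w with
    | QuaternionGroup.a i =>
      have h4 : g ^ 4 = 1 := by
        rw [← hw, hfa, ← pow_mul, mul_comm, pow_mul, hx4, one_pow]
      have : g = 1 := by
        calc g = g ^ 4 * (g ^ 3)⁻¹ := by group
        _ = 1 := by rw [h3, h4]; group
      simp [this]
    | QuaternionGroup.xa i =>
      exfalso
      have hg1 : π g = 1 := by
        obtain ⟨k, hk⟩ := Subgroup.mem_zpowers_iff.mp hga
        rw [← hk, _root_.map_zpow, hπa, _root_.one_zpow]
      rw [← hw, hfxa, _root_.map_mul, hπxp, mul_one] at hg1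
      exact hπy hg1
  -- H ≤ members
  have hQH : Q ≤ H := Subgroup.closure_mono (Set.subset_insert _ _)
  have haH : a ∈ H := Subgroup.subset_closure (by simp)
  have hAle : A ≤ H := Subgroup.zpowers_le.mpr haH
  -- decomposition
  have hdecomp : ∀ g ∈ H, ∃ u ∈ A, ∃ q ∈ Q, g = u * q := by
    intro g hg
    induction hg using Subgroup.closure_induction with
    | mem z hz =>
      rcases hz with rfl | rfl | rfl
      · exact ⟨z, Subgroup.mem_zpowers z, 1, one_mem _, (mul_one z).symm⟩
      · exact ⟨1, one_mem _, z, hxQ, (one_mul z).symm⟩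
      · exact ⟨1, one_mem _, z, hyQ, (one_mul z).symm⟩
    | one => exact ⟨1, one_mem _, 1, one_mem _, (one_mul 1).symm⟩
    | mul g h hgH hhH ihg ihh =>
      obtain ⟨u, hu, q, hq, rfl⟩ := ihg
      obtain ⟨u', hu', q', hq', rfl⟩ := ihh
      refine ⟨u * (q * u' * q⁻¹), mul_mem hu (hnorm q (hQH hq) u' hu'),
        q * q', mul_mem hq hq', by group⟩
    | inv g hgH ihg =>
      obtain ⟨u, hu, q, hq, rfl⟩ := ihg
      refine ⟨q⁻¹ * u⁻¹ * q, ?_, q⁻¹, inv_mem hq, by group⟩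
      have := hnorm q⁻¹ (inv_mem (hQH hq)) u⁻¹ (inv_mem hu)
      simpa using this
  -- cardinalities
  have hcA : Nat.card A = 3 := by rw [hA, Nat.card_zpowers, horda]
  have hcQ : Nat.card Q = 8 := by
    rw [Nat.card_congr e.toEquiv, Nat.card_eq_fintype_card, QuaternionGroup.card]
  have hcH : Nat.card H = 24 := by
    have hb : Function.Bijective (fun p : A × Q =>
        (⟨(p.1 : G) * (p.2 : G), mul_mem (hAle p.1.2) (hQH p.2.2)⟩ : H)) := by
      constructor
      · rintro ⟨u, q⟩ ⟨u', q'⟩ hp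
        have h1 : (u : G) * q = (u' : G) * q' := congrArg Subtype.val hp
        have h3 : (u' : G)⁻¹ * u = (q' : G) * (q : G)⁻¹ := by
          have e1 : (u' : G)⁻¹ * ((u : G) * q) * (q : G)⁻¹ = (u' : G)⁻¹ * u := by group
          have e2 : (u' : G)⁻¹ * ((u' : G) * q') * (q : G)⁻¹ = (q' : G) * (q : G)⁻¹ := by
            group
          rw [← e1, h1, e2]
        have hz : ((u' : G)⁻¹ * u : G) ∈ A ⊓ Q := by
          rw [Subgroup.mem_inf]
          exact ⟨mul_mem (inv_mem u'.2) u.2, h3 ▸ mul_mem q'.2 (inv_mem q.2)⟩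
        rw [hAQ, Subgroup.mem_bot] at hz
        have hu : (u' : G) = u := inv_mul_eq_one.mp hz
        have hq : (q : G) = q' := by
          rw [← hu] at h1
          exact mul_left_cancel h1
        exact Prod.ext (Subtype.ext hu.symm) (Subtype.ext hq)
      · rintro ⟨g, hg⟩
        obtain ⟨u, hu, q, hq, rfl⟩ := hdecomp g hg
        exact ⟨(⟨u, hu⟩, ⟨q, hq⟩), rfl⟩
    have := Nat.card_eq_of_bijective _ hb
    rw [Nat.card_prod, hcA, hcQ] at this
    omega
  exact ⟨hcH, hcA, hnorm, ⟨e⟩, hAQ, hdecomp, by rw [cxa, hainv], cya⟩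

set_option maxHeartbeats 4000000 in
/-- in `G = GL₂(W) ⋊ C₂`, the subgroup `G₂₄ = ⟨a, ω², ωφ⟩` has exactly
`24` elements, `⟨a⟩` is a normal cyclic subgroup of order `3` of `G₂₄`,
`Q = ⟨ω², ωφ⟩ ≅ Q₈`, `⟨a⟩ ∩ Q = {1}` and `G₂₄ = ⟨a⟩·Q`; that is, `G₂₄` is an
internal semidirect product `C₃ ⋊ Q₈`, with `ω²` acting on `⟨a⟩` by inversion and
`ωφ` acting trivially. -/
theorem statement6 [Invertible (2 : Wq)]
    (ω₀ : Wq) (hω₀ : ω₀ ^ 4 = -1) (hσω₀ : σW ω₀ = ω₀ ^ 3)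
    (θ : C2 →* MulAut (GL (Fin 2) Wq))
    (hθ : θ (Multiplicative.ofAdd 1) = Units.mapEquiv φM.toMulEquiv)
    (ωu au : GL (Fin 2) Wq) (hωu : (ωu : Matrix (Fin 2) (Fin 2) Wq) = iw ω₀)
    (hau : (au : Matrix (Fin 2) (Fin 2) Wq)
      = -((⅟ (2 : Wq)) • ((1 : Matrix (Fin 2) (Fin 2) Wq) + iw ω₀ * Sm)))
    (ωG φG aG : GL (Fin 2) Wq ⋊[θ] C2)
    (hωG : ωG = SemidirectProduct.inl ωu)
    (hφG : φG = SemidirectProduct.inr (Multiplicative.ofAdd 1))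
    (haG : aG = SemidirectProduct.inl au) :
    Nat.card (Subgroup.closure {aG, ωG ^ 2, ωG * φG}) = 24 ∧
    Nat.card (Subgroup.zpowers aG) = 3 ∧
    (∀ g ∈ Subgroup.closure {aG, ωG ^ 2, ωG * φG},
      ∀ x ∈ Subgroup.zpowers aG, g * x * g⁻¹ ∈ Subgroup.zpowers aG) ∧
    Nonempty ((Subgroup.closure {ωG ^ 2, ωG * φG}) ≃* QuaternionGroup 2) ∧
    Subgroup.zpowers aG ⊓ Subgroup.closure {ωG ^ 2, ωG * φG} = ⊥ ∧
    (∀ g ∈ Subgroup.closure {aG, ωG ^ 2, ωG * φG},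
      ∃ x ∈ Subgroup.zpowers aG, ∃ q ∈ Subgroup.closure {ωG ^ 2, ωG * φG},
        g = x * q) ∧
    ωG ^ 2 * aG * (ωG ^ 2)⁻¹ = aG⁻¹ ∧
    (ωG * φG) * aG * (ωG * φG)⁻¹ = aG := by
  set c : C2 := Multiplicative.ofAdd 1 with hc
  have h2 : (⅟(2:Wq)) * 2 = 1 := invOf_mul_self _
  have hω8 : ω₀ ^ 8 = 1 := by
    have h : ω₀ ^ 8 = (ω₀ ^ 4) ^ 2 := by ring
    rw [h, hω₀]; ring
  have hσ3 : σW (ω₀ ^ 3) = ω₀ := by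
    rw [map_pow, hσω₀, ← pow_mul]
    calc ω₀ ^ (3*3) = ω₀ ^ 8 * ω₀ := by ring
    _ = ω₀ := by rw [hω8, one_mul]
  have hσ2 : σW (⅟(2:Wq)) = ⅟2 := by
    have h : (2 : Wq) * σW (⅟2) = 1 := by
      have h0 : σW ((2:Wq) * ⅟2) = 1 := by rw [mul_invOf_self, _root_.map_one]
      rwa [_root_.map_mul, _root_.map_ofNat] at h0
    exact (invOf_eq_right_inv h).symm
  have hWuM : (ωu : Matrix (Fin 2) (Fin 2) Wq) = !![ω₀, 0; 0, ω₀ ^ 3] := by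
    rw [hωu]; unfold iw; rw [hσω₀]
  have hWuD : (ωu : Matrix (Fin 2) (Fin 2) Wq) = Matrix.diagonal ![ω₀, ω₀ ^ 3] := by
    rw [hWuM]; refine Matrix.ext fun i j => ?_; fin_cases i <;> fin_cases j <;>
      simp [Matrix.diagonal]
  have hAuM : (au : Matrix (Fin 2) (Fin 2) Wq)
      = !![-(⅟2), -(⅟2*(3*ω₀)); -(⅟2*ω₀^3), -(⅟2)] := by
    rw [hau]; refine Matrix.ext fun i j => ?_; fin_cases i <;> fin_cases j <;>
      simp [iw, Sm, Matrix.mul_apply, Fin.sum_univ_two, hσω₀] <;> ring_nf <;> simp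
  have hθc : ∀ u : GL (Fin 2) Wq,
      ((θ c u : Matrix (Fin 2) (Fin 2) Wq)) = ((u : Matrix (Fin 2) (Fin 2) Wq)).map σW := by
    intro u
    rw [hc, hθ, Units.coe_mapEquiv]
    show φM _ = _
    rw [φM, RingEquiv.mapMatrix_apply]
  have hθωM : ((θ c ωu : Matrix (Fin 2) (Fin 2) Wq)) = !![ω₀^3, 0; 0, ω₀] := by
    rw [hθc, hWuM]; refine Matrix.ext fun i j => ?_; fin_cases i <;> fin_cases j <;>
      simp [Matrix.map_apply, hσω₀, hσ3]
  have hθaM : ((θ c au : Matrix (Fin 2) (Fin 2) Wq))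
      = !![-(⅟2), -(⅟2*(3*ω₀^3)); -(⅟2*ω₀), -(⅟2)] := by
    rw [hθc, hAuM]; refine Matrix.ext fun i j => ?_; fin_cases i <;> fin_cases j <;>
      simp [Matrix.map_apply, hσω₀, hσ3, hσ2, _root_.map_ofNat, _root_.map_neg, _root_.map_mul]
  have hred : ∀ m : ℕ, ω₀ ^ m = ω₀ ^ (m % 8) := by
    intro m
    conv_lhs => rw [← Nat.div_add_mod m 8]
    rw [pow_add, pow_mul, hω8, one_pow, one_mul]
  have hθωD : ((θ c ωu : Matrix (Fin 2) (Fin 2) Wq)) = Matrix.diagonal ![ω₀^3, ω₀] := by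
    rw [hθωM]; refine Matrix.ext fun i j => ?_; fin_cases i <;> fin_cases j <;>
      simp [Matrix.diagonal]
  -- Unit-level identities
  have U1 : au ^ 3 = 1 := by
    have h3' : au ^ 3 = au * au * au := by rw [pow_succ au 2, sq]
    rw [h3']
    refine Units.ext ?_
    rw [Units.val_mul, Units.val_mul, Units.val_one, hAuM]
    refine Matrix.ext fun i j => ?_
    fin_cases i <;> fin_cases j <;>
      simp [Matrix.mul_apply, Fin.sum_univ_two, Matrix.one_apply]
    · linear_combination (-(9:Wq)*⅟2^3) * hω₀ + (4*⅟2^2+2*⅟2+1) * h2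
    · linear_combination (-(9:Wq)*⅟2^3*ω₀) * hω₀
    · linear_combination (-(3:Wq)*⅟2^3*ω₀^3) * hω₀
    · linear_combination (-(9:Wq)*⅟2^3) * hω₀ + (4*⅟2^2+2*⅟2+1) * h2
  have U1ne : au ≠ 1 := by
    intro h
    have hm : (au : Matrix (Fin 2) (Fin 2) Wq) = 1 := by rw [h, Units.val_one]
    rw [hAuM] at hm
    have hz : (!![-(⅟2), -(⅟2*(3*ω₀)); -(⅟2*ω₀^3), -(⅟2)] : Matrix (Fin 2) (Fin 2) Wq) 1 0
        = (1 : Matrix (Fin 2) (Fin 2) Wq) 1 0 := by rw [hm]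
    norm_num [Matrix.one_apply] at hz
    rcases hz with hz | hz
    · exact one_ne_zero (by linear_combination -h2 + (2:Wq)*hz)
    · exact one_ne_zero (by linear_combination hω₀ + (-(ω₀^3)) * hz)
  have U2 : ωu ^ 8 = 1 := by
    refine Units.ext ?_
    rw [Units.val_pow_eq_pow_val, Units.val_one, hWuD, Matrix.diagonal_pow]
    refine Matrix.ext fun i j => ?_
    fin_cases i <;> fin_cases j <;> simp [Matrix.diagonal, Matrix.one_apply]
    · exact hω8
    · linear_combination ((ω₀:Wq)^16+ω₀^8+1) * hω8
  have U3 : ωu ^ 4 ≠ 1 := by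
    intro h
    have hm : ((ωu ^ 4 : GL (Fin 2) Wq) : Matrix (Fin 2) (Fin 2) Wq) = 1 := by
      rw [h, Units.val_one]
    rw [Units.val_pow_eq_pow_val, hWuD, Matrix.diagonal_pow] at hm
    have hz : (Matrix.diagonal (![ω₀, ω₀ ^ 3] ^ 4) : Matrix (Fin 2) (Fin 2) Wq) 0 0
        = (1 : Matrix (Fin 2) (Fin 2) Wq) 0 0 := by rw [hm]
    simp only [Matrix.diagonal_apply_eq, Matrix.one_apply_eq, Pi.pow_apply,
      Matrix.cons_val_zero] at hz
    rw [hω₀] at hz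
    have h1 : (2:Wq) = 0 := by linear_combination -hz
    exact Invertible.ne_zero (2:Wq) h1
  have U4 : ωu * θ c ωu = ωu ^ 4 := by
    refine Units.ext ?_
    rw [Units.val_mul, Units.val_pow_eq_pow_val, hθωD, hWuD, Matrix.diagonal_pow,
      Matrix.diagonal_mul_diagonal]
    refine Matrix.ext fun i j => ?_
    fin_cases i <;> fin_cases j <;> simp [Matrix.diagonal]
    · ring
    · linear_combination (-(ω₀^4)) * hω8
  have U5 : ωu * θ c (ωu ^ 2) = ωu ^ 7 := by
    refine Units.ext ?_
    rw [Units.val_mul, Units.val_pow_eq_pow_val, map_pow, Units.val_pow_eq_pow_val, hθωD,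
      hWuD, Matrix.diagonal_pow, Matrix.diagonal_pow, Matrix.diagonal_mul_diagonal]
    refine Matrix.ext fun i j => ?_
    fin_cases i <;> fin_cases j <;> simp [Matrix.diagonal]
    · ring
    · linear_combination (-(ω₀^13+ω₀^5)) * hω8
  have U6 : ωu ^ 2 * au = au ^ 2 * ωu ^ 2 := by
    rw [sq au, sq ωu]
    refine Units.ext ?_
    rw [Units.val_mul, Units.val_mul, Units.val_mul, Units.val_mul, Units.val_mul,
      hWuD, hAuM]
    refine Matrix.ext fun i j => ?_
    fin_cases i <;> fin_cases j <;>
      simp [Matrix.mul_apply, Fin.sum_univ_two, Matrix.diagonal]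
    · linear_combination (-(3:Wq)*⅟2^2*ω₀^2) * hω₀ + (⅟2*ω₀^2) * h2
    · linear_combination (-(6:Wq)*⅟2^2*ω₀^3) * hω₀ + (3*⅟2*ω₀^3) * h2
    · linear_combination (-(⅟(2:Wq)*ω₀^5)) * hω₀ + (-(⅟(2:Wq)*ω₀^5)) * h2
    · linear_combination (-(3:Wq)*⅟2^2*ω₀^6) * hω₀ + (⅟2*ω₀^6) * h2
  have U7 : ωu * θ c au = au * ωu := by
    refine Units.ext ?_
    rw [Units.val_mul, Units.val_mul, hθaM, hWuM, hAuM]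
    refine Matrix.ext fun i j => ?_
    fin_cases i <;> fin_cases j <;>
      simp [Matrix.mul_apply, Fin.sum_univ_two] <;> ring
  have hcomm : ∀ u : GL (Fin 2) Wq,
      (SemidirectProduct.inr c : GL (Fin 2) Wq ⋊[θ] C2) * SemidirectProduct.inl u
        = SemidirectProduct.inl (θ c u) * SemidirectProduct.inr c := by
    intro u
    rw [SemidirectProduct.inl_aut]
    simp [mul_assoc]
  have hcc : (SemidirectProduct.inr c : GL (Fin 2) Wq ⋊[θ] C2)
      * SemidirectProduct.inr c = 1 := by
    rw [← _root_.map_mul, show c * c = 1 from by decide, _root_.map_one]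
  have R_a3 : aG ^ 3 = 1 := by
    rw [haG, ← _root_.map_pow, U1, _root_.map_one]
  have R_ane : aG ≠ 1 := by
    rw [haG]
    intro h
    exact U1ne (SemidirectProduct.inl_injective (by rw [h, _root_.map_one]))
  have R_x4 : (ωG ^ 2) ^ 4 = 1 := by
    rw [hωG, ← pow_mul, ← _root_.map_pow, show ((2*4 : ℕ)) = 8 from rfl, U2, _root_.map_one]
  have R_x2 : (ωG ^ 2) ^ 2 ≠ 1 := by
    rw [hωG, ← pow_mul, ← _root_.map_pow, show ((2*2 : ℕ)) = 4 from rfl]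
    intro h
    exact U3 (SemidirectProduct.inl_injective (by rw [h, _root_.map_one]))
  have R_y2 : (ωG * φG) ^ 2 = (ωG ^ 2) ^ 2 := by
    rw [hωG, hφG]
    calc (SemidirectProduct.inl ωu * SemidirectProduct.inr c) ^ 2
        = SemidirectProduct.inl ωu * (SemidirectProduct.inr c * SemidirectProduct.inl ωu)
          * SemidirectProduct.inr c := by rw [sq]; group
      _ = SemidirectProduct.inl ωu
          * (SemidirectProduct.inl (θ c ωu) * SemidirectProduct.inr c)
          * SemidirectProduct.inr c := by rw [hcomm]
      _ = SemidirectProduct.inl (ωu * θ c ωu)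
          * (SemidirectProduct.inr c * SemidirectProduct.inr c) := by
          rw [_root_.map_mul]; group
      _ = SemidirectProduct.inl (ωu ^ 4) := by rw [hcc, mul_one, U4]
      _ = (SemidirectProduct.inl ωu ^ 2) ^ 2 := by
          rw [← pow_mul, ← _root_.map_pow, show ((2*2 : ℕ)) = 4 from rfl]
  have R_yx : (ωG * φG) * (ωG ^ 2) = (ωG ^ 2) ^ 3 * (ωG * φG) := by
    rw [hωG, hφG]
    have h76 : ωu ^ 7 = ωu ^ 6 * ωu := pow_succ ωu 6
    calc SemidirectProduct.inl ωu * SemidirectProduct.inr c * SemidirectProduct.inl ωu ^ 2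
        = SemidirectProduct.inl ωu
          * (SemidirectProduct.inr c * SemidirectProduct.inl (ωu ^ 2)) := by
          rw [← _root_.map_pow]; group
      _ = SemidirectProduct.inl ωu
          * (SemidirectProduct.inl (θ c (ωu ^ 2)) * SemidirectProduct.inr c) := by rw [hcomm]
      _ = SemidirectProduct.inl (ωu * θ c (ωu ^ 2)) * SemidirectProduct.inr c := by
          rw [_root_.map_mul]; group
      _ = SemidirectProduct.inl (ωu ^ 7) * SemidirectProduct.inr c := by rw [U5]
      _ = (SemidirectProduct.inl ωu ^ 2) ^ 3
          * (SemidirectProduct.inl ωu * SemidirectProduct.inr c) := by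
          rw [← pow_mul, ← _root_.map_pow, show ((2*3 : ℕ)) = 6 from rfl, h76,
            _root_.map_mul]
          group
  have R_xa : (ωG ^ 2) * aG = aG ^ 2 * (ωG ^ 2) := by
    rw [hωG, haG, ← _root_.map_pow, ← _root_.map_pow, ← _root_.map_mul, ← _root_.map_mul, U6]
  have R_ya : (ωG * φG) * aG = aG * (ωG * φG) := by
    rw [hωG, hφG, haG]
    calc SemidirectProduct.inl ωu * SemidirectProduct.inr c * SemidirectProduct.inl au
        = SemidirectProduct.inl ωu
          * (SemidirectProduct.inr c * SemidirectProduct.inl au) := by group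
      _ = SemidirectProduct.inl ωu
          * (SemidirectProduct.inl (θ c au) * SemidirectProduct.inr c) := by rw [hcomm]
      _ = SemidirectProduct.inl (ωu * θ c au) * SemidirectProduct.inr c := by
          rw [_root_.map_mul]; group
      _ = SemidirectProduct.inl (au * ωu) * SemidirectProduct.inr c := by rw [U7]
      _ = SemidirectProduct.inl au
          * (SemidirectProduct.inl ωu * SemidirectProduct.inr c) := by
          rw [_root_.map_mul]; group
  have hπa : SemidirectProduct.rightHom aG = 1 := by
    rw [haG, SemidirectProduct.rightHom_inl]
  have hπx : SemidirectProduct.rightHom (ωG ^ 2) = 1 := by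
    rw [hωG, ← _root_.map_pow, SemidirectProduct.rightHom_inl]
  have hπy : SemidirectProduct.rightHom (ωG * φG) ≠ 1 := by
    rw [hωG, hφG, _root_.map_mul, SemidirectProduct.rightHom_inl,
      SemidirectProduct.rightHom_inr, one_mul]
    decide
  exact quat_key aG (ωG ^ 2) (ωG * φG) R_a3 R_ane R_x4 R_x2 R_y2 R_yx R_xa R_ya
    SemidirectProduct.rightHom hπa hπx hπy
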